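/- Let G be a finite subgroup of the complex unit group 𝕋 and let (Γ,Ψ) be a G-gain graph whose underlying graph Γ is connected, with complex adjacency matrix A ∈ M_n(ℂ) whose (i,j) entry is Ψ(v_i,v_j) ∈ 𝕋 if v_i ∼ v_j and 0 otherwise. Then (Γ,Ψ) is balanced if and only if the largest eigenvalue λ₁(Γ,Ψ) of the Hermitian matrix A equals the largest eigenvalue λ₁(Γ) of the adjacency matrix of the underlying graph Γ. -/

import Mathlib

open scoped Kronecker
open Matrix Polynomial Filter

namespace GainPaper

variable {G : Type*} [Group G]

/-- The gain of a walk: product of the gains of its darts. -/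
def walkGain {n : ℕ} {Γ : SimpleGraph (Fin n)} {M : Type*} [Monoid M]
    (Ψ : Fin n → Fin n → M) {u v : Fin n} (p : Γ.Walk u v) : M :=
  (p.darts.map fun d => Ψ d.toProd.1 d.toProd.2).prod

/-- `Ψ` is a gain function on `Γ`: the gain of an edge in the reverse
orientation is the inverse of its gain. -/
def IsGain {n : ℕ} (Γ : SimpleGraph (Fin n)) (Ψ : Fin n → Fin n → G) : Prop :=
  ∀ i j, Γ.Adj i j → Ψ j i = (Ψ i j)⁻¹

/-- A gain graph is balanced if every closed walk has gain `1`. -/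
def IsBalanced {n : ℕ} (Γ : SimpleGraph (Fin n)) {M : Type*} [Monoid M]
    (Ψ : Fin n → Fin n → M) : Prop :=
  ∀ (v : Fin n) (p : Γ.Walk v v), walkGain Ψ p = 1

/-- The adjacency matrix of a gain graph, with entries in the group algebra ℂG. -/
noncomputable def gainAdj {n : ℕ} (Γ : SimpleGraph (Fin n)) [DecidableRel Γ.Adj]
    (Ψ : Fin n → Fin n → G) : Matrix (Fin n) (Fin n) (MonoidAlgebra ℂ G) :=
  Matrix.of fun i j => if Γ.Adj i j then MonoidAlgebra.single (Ψ i j) 1 else 0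

/-- The involution on ℂG: `(Σ f_x x)* = Σ conj(f_x) x⁻¹`. -/
noncomputable def starCG (f : MonoidAlgebra ℂ G) : MonoidAlgebra ℂ G :=
  f.coeff.sum fun x c => MonoidAlgebra.single x⁻¹ (starRingEnd ℂ c)

/-- The involution on M_n(ℂG): `(F*)_{i,j} = (F_{j,i})*`. -/
noncomputable def starM {n : ℕ} (F : Matrix (Fin n) (Fin n) (MonoidAlgebra ℂ G)) :
    Matrix (Fin n) (Fin n) (MonoidAlgebra ℂ G) :=
  Matrix.of fun i j => starCG (F j i)

/-- The trace on M_n(ℂG): sum over the diagonal of the coefficients of `1_G`. -/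
noncomputable def trCG {n : ℕ} (F : Matrix (Fin n) (Fin n) (MonoidAlgebra ℂ G)) : ℂ :=
  ∑ i, (F i i).coeff 1

/-- The Fourier transform of `f ∈ ℂG` at `π`: `Σ_x f(x) π(x)`. -/
noncomputable def fourier {m : Type*} (f : MonoidAlgebra ℂ G) (π : G → Matrix m m ℂ) :
    Matrix m m ℂ :=
  f.coeff.sum fun x c => c • π x

/-- The (finite) set of group elements appearing in some entry of `F`. -/
noncomputable def matSupport {n : ℕ} (F : Matrix (Fin n) (Fin n) (MonoidAlgebra ℂ G)) :
    Finset G :=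
  letI := Classical.decEq G
  Finset.univ.biUnion fun i : Fin n => Finset.univ.biUnion fun j : Fin n => (F i j).coeff.support

/-- `F(x)`: the complex matrix of coefficients of `x` in the entries of `F`. -/
def matCoeff {n : ℕ} (F : Matrix (Fin n) (Fin n) (MonoidAlgebra ℂ G)) (x : G) :
    Matrix (Fin n) (Fin n) ℂ :=
  Matrix.of fun i j => (F i j).coeff x

/-- Fourier transform of `F ∈ M_n(ℂG)` at `π`: `F̂(π) = Σ_{x∈G} F(x) ⊗ π(x)`. -/
noncomputable def fourierM {n : ℕ} {m : Type*} (F : Matrix (Fin n) (Fin n) (MonoidAlgebra ℂ G))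
    (π : G → Matrix m m ℂ) : Matrix (Fin n × m) (Fin n × m) ℂ :=
  ∑ x ∈ matSupport F, matCoeff F x ⊗ₖ π x

/-- A representation is unitary if each `π g` is a unitary matrix. -/
def IsUnitaryRep {m : Type*} [Fintype m] [DecidableEq m] (π : G →* Matrix m m ℂ) : Prop :=
  ∀ g, π g ∈ Matrix.unitaryGroup m ℂ

/-- Irreducibility: the space is nonzero and has no nontrivial invariant subspace. -/
def IsIrred {m : Type*} [Fintype m] [DecidableEq m] (π : G →* Matrix m m ℂ) : Prop :=
  Nonempty m ∧
    ∀ W : Submodule ℂ (m → ℂ), (∀ g, ∀ v ∈ W, (π g).mulVec v ∈ W) → W = ⊥ ∨ W = ⊤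

/-- Equivalence of two matrix representations: an invertible intertwiner. -/
def RepEquiv {m m' : Type*} [Fintype m] [DecidableEq m] [Fintype m'] [DecidableEq m']
    (π : G →* Matrix m m ℂ) (π' : G →* Matrix m' m' ℂ) : Prop :=
  ∃ e : (m → ℂ) ≃ₗ[ℂ] (m' → ℂ), ∀ g v, e ((π g).mulVec v) = (π' g).mulVec (e v)

/-- λ₁: the largest real root of the characteristic polynomial
(= the largest eigenvalue, for a Hermitian matrix). -/
noncomputable def lam1 {m : Type*} [Fintype m] [DecidableEq m] (M : Matrix m m ℂ) : ℝ :=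
  sSup {x : ℝ | M.charpoly.IsRoot (x : ℂ)}

/-- Spectral radius: the sup of the absolute values of the eigenvalues. -/
noncomputable def specRad {m : Type*} [Fintype m] [DecidableEq m] (M : Matrix m m ℂ) : ℝ :=
  sSup {r : ℝ | ∃ μ : ℂ, M.charpoly.IsRoot μ ∧ r = ‖μ‖}

/-- Adjacency relation of the cover graph on `V × G`:
`(u,g) ∼ (v,h)` iff `u ∼ v` and `h = Ψ(u,v)⁻¹ g`. -/
def coverAdj {n : ℕ} (Γ : SimpleGraph (Fin n)) (Ψ : Fin n → Fin n → G) (p q : Fin n × G) :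
    Prop :=
  Γ.Adj p.1 q.1 ∧ q.2 = (Ψ p.1 q.1)⁻¹ * p.2

/-- The {0,1} adjacency matrix of the cover graph. -/
noncomputable def coverMatrix {n : ℕ} [DecidableEq G] (Γ : SimpleGraph (Fin n))
    [DecidableRel Γ.Adj] (Ψ : Fin n → Fin n → G) : Matrix (Fin n × G) (Fin n × G) ℂ :=
  Matrix.of fun p q => if Γ.Adj p.1 q.1 ∧ q.2 = (Ψ p.1 q.1)⁻¹ * p.2 then 1 else 0

/-- The left regular representation, as matrices:
`λ_G(g)_{r,p} = 1` if `g = r p⁻¹`, else `0`. -/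
noncomputable def lamG [DecidableEq G] : G → Matrix G G ℂ :=
  fun g => Matrix.of fun r p => if g = r * p⁻¹ then 1 else 0



/-! ### Auxiliary spectral lemmas -/

section SpectralAux

variable {N : ℕ} {M : Matrix (Fin N) (Fin N) ℂ}

lemma aux_star_mul_normSq (z : ℂ) : star z * z = (Complex.normSq z : ℂ) := by
  rw [RCLike.star_def, ← Complex.normSq_eq_conj_mul_self]

lemma aux_charpoly_eval (M : Matrix (Fin N) (Fin N) ℂ) (μ : ℂ) :
    M.charpoly.eval μ = (Matrix.scalar (Fin N) μ - M).det := by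
  rw [Matrix.charpoly, _root_.eval_det, matPolyEquiv_charmatrix]; simp

lemma aux_det_scalar_sub (hM : M.IsHermitian) (μ : ℂ) :
    (Matrix.scalar (Fin N) μ - M).det = ∏ i, (μ - (hM.eigenvalues i : ℂ)) := by
  set U : Matrix (Fin N) (Fin N) ℂ := (hM.eigenvectorUnitary : Matrix (Fin N) (Fin N) ℂ) with hUdef
  have hU : U * star U = 1 := (Matrix.mem_unitaryGroup_iff).mp hM.eigenvectorUnitary.2
  have hsc : Matrix.scalar (Fin N) μ = Matrix.diagonal (fun _ => μ) := by
    ext i j; simp [Matrix.scalar_apply, Matrix.diagonal]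
  have key : Matrix.scalar (Fin N) μ - M
      = U * (Matrix.scalar (Fin N) μ - Matrix.diagonal (Complex.ofReal ∘ hM.eigenvalues)) * star U := by
    rw [mul_sub, sub_mul]
    congr 1
    · have : U * Matrix.scalar (Fin N) μ = Matrix.scalar (Fin N) μ * U :=
        (Matrix.scalar_commute μ (fun r => (Commute.all _ _)) U).symm
      rw [this, mul_assoc, hU, mul_one]
    · exact hM.spectral_theorem
  rw [key, Matrix.det_mul, Matrix.det_mul, mul_right_comm, ← Matrix.det_mul, hU,
    Matrix.det_one, one_mul, hsc, Matrix.diagonal_sub, Matrix.det_diagonal]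
  rfl

lemma aux_root_set_eq (hM : M.IsHermitian) :
    {x : ℝ | M.charpoly.IsRoot (x : ℂ)} = Set.range hM.eigenvalues := by
  ext x
  simp only [Set.mem_setOf_eq, IsRoot.def, aux_charpoly_eval, aux_det_scalar_sub hM,
    Finset.prod_eq_zero_iff, Set.mem_range]
  constructor
  · rintro ⟨i, -, hi⟩
    exact ⟨i, by exact_mod_cast (sub_eq_zero.mp hi).symm⟩
  · rintro ⟨i, hi⟩
    exact ⟨i, Finset.mem_univ i, by rw [sub_eq_zero]; exact_mod_cast hi.symm⟩

lemma aux_lam1_eigen (hM : M.IsHermitian) [Nonempty (Fin N)] :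
    (∃ i, hM.eigenvalues i = lam1 M) ∧ ∀ i, hM.eigenvalues i ≤ lam1 M := by
  have hfin : (Set.range hM.eigenvalues).Finite := Set.finite_range _
  have hne : (Set.range hM.eigenvalues).Nonempty := Set.range_nonempty _
  have h1 : lam1 M ∈ Set.range hM.eigenvalues := by
    rw [lam1, aux_root_set_eq hM]; exact hne.csSup_mem hfin
  refine ⟨h1.imp (fun i hi => hi), fun i => ?_⟩
  rw [lam1, aux_root_set_eq hM]
  exact le_csSup hfin.bddAbove ⟨i, rfl⟩

lemma aux_dot_star_self (z : Fin N → ℂ) :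
    star z ⬝ᵥ z = ((∑ i, Complex.normSq (z i) : ℝ) : ℂ) := by
  rw [dotProduct]
  push_cast
  exact Finset.sum_congr rfl fun i _ => aux_star_mul_normSq (z i)

lemma aux_quad_eq (hM : M.IsHermitian) (x : Fin N → ℂ) :
    star x ⬝ᵥ (M *ᵥ x) =
      ((∑ i, hM.eigenvalues i *
        Complex.normSq ((star (hM.eigenvectorUnitary : Matrix (Fin N) (Fin N) ℂ) *ᵥ x) i) : ℝ) : ℂ) := by
  set U : Matrix (Fin N) (Fin N) ℂ := (hM.eigenvectorUnitary : Matrix (Fin N) (Fin N) ℂ) with hUdef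
  set y := star U *ᵥ x with hy
  have hstary : star y = star x ᵥ* U := by
    rw [hy, Matrix.star_mulVec, Matrix.star_eq_conjTranspose, Matrix.conjTranspose_conjTranspose]
  conv_lhs => rw [hM.spectral_theorem, Unitary.conjStarAlgAut_apply]
  rw [← Matrix.mulVec_mulVec, ← Matrix.mulVec_mulVec, Matrix.dotProduct_mulVec, ← hstary, ← hy]
  rw [dotProduct]
  push_cast
  refine Finset.sum_congr rfl fun i _ => ?_
  rw [Matrix.mulVec_diagonal]
  simp only [Pi.star_apply, Function.comp_apply]
  rw [show (RCLike.ofReal (hM.eigenvalues i) : ℂ) = ((hM.eigenvalues i : ℝ) : ℂ) from rfl,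
    mul_left_comm, aux_star_mul_normSq]

lemma aux_normsq_eq (hM : M.IsHermitian) (x : Fin N → ℂ) :
    ∑ i, Complex.normSq (x i) =
      ∑ i, Complex.normSq ((star (hM.eigenvectorUnitary : Matrix (Fin N) (Fin N) ℂ) *ᵥ x) i) := by
  set U : Matrix (Fin N) (Fin N) ℂ := (hM.eigenvectorUnitary : Matrix (Fin N) (Fin N) ℂ) with hUdef
  have hU : U * star U = 1 := (Matrix.mem_unitaryGroup_iff).mp hM.eigenvectorUnitary.2
  set y := star U *ᵥ x with hy
  have hstary : star y = star x ᵥ* U := by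
    rw [hy, Matrix.star_mulVec, Matrix.star_eq_conjTranspose, Matrix.conjTranspose_conjTranspose]
  have key : star y ⬝ᵥ y = star x ⬝ᵥ x := by
    rw [hstary, ← Matrix.dotProduct_mulVec, hy, Matrix.mulVec_mulVec, hU, Matrix.one_mulVec]
  rw [aux_dot_star_self, aux_dot_star_self] at key
  exact_mod_cast key.symm

lemma aux_rayleigh_le [Nonempty (Fin N)] (hM : M.IsHermitian) (x : Fin N → ℂ) :
    (star x ⬝ᵥ (M *ᵥ x)).re ≤ lam1 M * ∑ i, Complex.normSq (x i) := by
  rw [aux_quad_eq hM x, Complex.ofReal_re, aux_normsq_eq hM x, Finset.mul_sum]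
  exact Finset.sum_le_sum fun i _ =>
    mul_le_mul_of_nonneg_right ((aux_lam1_eigen hM).2 i) (Complex.normSq_nonneg _)

lemma aux_rayleigh_eq [Nonempty (Fin N)] (hM : M.IsHermitian) (x : Fin N → ℂ)
    (h : (star x ⬝ᵥ (M *ᵥ x)).re = lam1 M * ∑ i, Complex.normSq (x i)) :
    M *ᵥ x = (lam1 M : ℂ) • x := by
  set U : Matrix (Fin N) (Fin N) ℂ := (hM.eigenvectorUnitary : Matrix (Fin N) (Fin N) ℂ) with hUdef
  have hU : U * star U = 1 := (Matrix.mem_unitaryGroup_iff).mp hM.eigenvectorUnitary.2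
  set y := star U *ᵥ x with hy
  rw [aux_quad_eq hM x, Complex.ofReal_re, aux_normsq_eq hM x, Finset.mul_sum] at h
  have hzero : ∑ i ∈ Finset.univ, (lam1 M - hM.eigenvalues i) * Complex.normSq (y i) = 0 := by
    have := sub_eq_zero.mpr h.symm
    rw [← Finset.sum_sub_distrib] at this
    simpa [sub_mul] using this
  have hterm : ∀ i ∈ Finset.univ, (lam1 M - hM.eigenvalues i) * Complex.normSq (y i) = 0 :=
    (Finset.sum_eq_zero_iff_of_nonneg (fun i _ =>
      mul_nonneg (sub_nonneg.mpr ((aux_lam1_eigen hM).2 i)) (Complex.normSq_nonneg _))).mp hzero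
  have hDy : Matrix.diagonal ((RCLike.ofReal : ℝ → ℂ) ∘ hM.eigenvalues) *ᵥ y = (lam1 M : ℂ) • y := by
    funext i
    rw [Matrix.mulVec_diagonal]
    simp only [Pi.smul_apply, smul_eq_mul, Function.comp_apply]
    by_cases hyi : y i = 0
    · rw [hyi, mul_zero, mul_zero]
    · have hnsq : Complex.normSq (y i) ≠ 0 := fun hc => hyi (Complex.normSq_eq_zero.mp hc)
      have : lam1 M - hM.eigenvalues i = 0 := by
        rcases mul_eq_zero.mp (hterm i (Finset.mem_univ i)) with h' | h'
        · exact h'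
        · exact absurd h' hnsq
      rw [show hM.eigenvalues i = lam1 M from by linarith]; exact rfl
  have hx : U *ᵥ y = x := by rw [hy, Matrix.mulVec_mulVec, hU, Matrix.one_mulVec]
  conv_lhs => rw [hM.spectral_theorem, Unitary.conjStarAlgAut_apply]
  rw [← Matrix.mulVec_mulVec, ← Matrix.mulVec_mulVec, ← hy, hDy, Matrix.mulVec_smul, hx]

lemma aux_exists_top_eigenvector [Nonempty (Fin N)] (hM : M.IsHermitian) :
    ∃ x : Fin N → ℂ, x ≠ 0 ∧ M *ᵥ x = (lam1 M : ℂ) • x := by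
  obtain ⟨i, hi⟩ := (aux_lam1_eigen hM).1
  refine ⟨⇑(hM.eigenvectorBasis i), ?_, ?_⟩
  · intro hzero
    have hnorm := hM.eigenvectorBasis.orthonormal.1 i
    rw [show (hM.eigenvectorBasis i : EuclideanSpace ℂ (Fin N)) = 0 from WithLp.ofLp_injective 2 hzero] at hnorm
    simp at hnorm
  · have := hM.mulVec_eigenvectorBasis i
    rw [this, ← hi]
    funext j
    simp [Complex.real_smul]

lemma aux_quad_expand (M : Matrix (Fin N) (Fin N) ℂ) (v : Fin N → ℂ) :
    star v ⬝ᵥ (M *ᵥ v) = ∑ i, ∑ j, star (v i) * M i j * v j := by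
  simp [dotProduct, Matrix.mulVec, Finset.mul_sum, mul_assoc]

lemma aux_eq_abs_of_re_eq_abs {z : ℂ} (h : z.re = ‖z‖) :
    z = (‖z‖ : ℂ) := by
  have h3 : (‖z‖)^2 = Complex.normSq z := Complex.sq_norm z
  have h2 : Complex.normSq z = z.re^2 + z.im^2 := by rw [Complex.normSq_apply]; ring
  have h4 : z.re^2 = ‖z‖^2 := by rw [h]
  have him2 : z.im^2 = 0 := by linarith
  have him : z.im = 0 := pow_eq_zero_iff two_ne_zero |>.mp him2
  exact Complex.ext (by rw [Complex.ofReal_re, ← h]) (by rw [Complex.ofReal_im, him])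

end SpectralAux

/-! ### Auxiliary walk-gain lemmas -/

section GainAux

variable {n : ℕ} {Γ : SimpleGraph (Fin n)} {Ψ : Fin n → Fin n → ℂ}

lemma walkGain_nil {u : Fin n} : walkGain Ψ (SimpleGraph.Walk.nil : Γ.Walk u u) = 1 := rfl

lemma walkGain_cons {u v w : Fin n} (h : Γ.Adj u v) (p : Γ.Walk v w) :
    walkGain Ψ (SimpleGraph.Walk.cons h p) = Ψ u v * walkGain Ψ p := by
  simp [walkGain, SimpleGraph.Walk.darts_cons]

lemma walkGain_append {u v w : Fin n} (p : Γ.Walk u v) (q : Γ.Walk v w) :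
    walkGain Ψ (p.append q) = walkGain Ψ p * walkGain Ψ q := by
  simp [walkGain, SimpleGraph.Walk.darts_append]

lemma walkGain_reverse_mul (hinv : ∀ i j, Γ.Adj i j → Ψ j i * Ψ i j = 1)
    {u v : Fin n} (p : Γ.Walk u v) :
    walkGain Ψ p.reverse * walkGain Ψ p = 1 := by
  induction p with
  | nil => simp [walkGain_nil]
  | @cons a b c h q ih =>
    rw [SimpleGraph.Walk.reverse_cons, walkGain_append, walkGain_cons, walkGain_cons,
      walkGain_nil, mul_one]
    calc walkGain Ψ q.reverse * Ψ b a * (Ψ a b * walkGain Ψ q)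
        = (walkGain Ψ q.reverse * walkGain Ψ q) * (Ψ b a * Ψ a b) := by ring
      _ = 1 := by rw [ih, hinv _ _ h, one_mul]

lemma walkGain_telescope {φ : Fin n → ℂ}
    (hunit : ∀ i, (starRingEnd ℂ) (φ i) * φ i = 1)
    (hedge : ∀ i j, Γ.Adj i j → Ψ i j = φ i * (starRingEnd ℂ) (φ j))
    {u v : Fin n} (p : Γ.Walk u v) :
    walkGain Ψ p = φ u * (starRingEnd ℂ) (φ v) := by
  induction p with
  | nil => rw [walkGain_nil, mul_comm, hunit]
  | @cons a b c h q ih =>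
    rw [walkGain_cons, ih, hedge _ _ h]
    calc φ a * (starRingEnd ℂ) (φ b) * (φ b * (starRingEnd ℂ) (φ c))
        = φ a * ((starRingEnd ℂ) (φ b) * φ b) * (starRingEnd ℂ) (φ c) := by ring
      _ = _ := by rw [hunit, mul_one]

lemma walkGain_abs (habs : ∀ i j, Γ.Adj i j → ‖Ψ i j‖ = 1)
    {u v : Fin n} (p : Γ.Walk u v) : ‖walkGain Ψ p‖ = 1 := by
  induction p with
  | nil => simp [walkGain_nil]
  | cons h q ih => rw [walkGain_cons, norm_mul, habs _ _ h, one_mul, ih]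

end GainAux

/-- a connected gain graph on a finite subgroup of 𝕋 is balanced iff
its index equals the index of the underlying graph. -/
theorem statement14 {n : ℕ} (Γ : SimpleGraph (Fin n)) [DecidableRel Γ.Adj]
    (hconn : Γ.Connected) (H : Subgroup ℂˣ) (hfin : (H : Set ℂˣ).Finite)
    (hT : ∀ u : ℂˣ, u ∈ H → ‖((u : ℂˣ) : ℂ)‖ = 1)
    (Ψ : Fin n → Fin n → ℂ)
    (hmem : ∀ i j, Γ.Adj i j → ∃ u ∈ H, ((u : ℂˣ) : ℂ) = Ψ i j)
    (hinv : ∀ i j, Γ.Adj i j → Ψ j i = (Ψ i j)⁻¹) :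
    IsBalanced Γ Ψ ↔
      lam1 (Matrix.of fun i j => if Γ.Adj i j then Ψ i j else 0) =
        lam1 (Γ.adjMatrix ℂ) := by
  classical
  haveI hNE : Nonempty (Fin n) := hconn.nonempty
  have habs : ∀ i j, Γ.Adj i j → ‖Ψ i j‖ = 1 := by
    intro i j h
    obtain ⟨u, hu, he⟩ := hmem i j h
    rw [← he]; exact hT u hu
  have hne0 : ∀ i j, Γ.Adj i j → Ψ i j ≠ 0 := by
    intro i j h hc
    have := habs i j h
    rw [hc] at this; simp at this
  have hmc : ∀ i j, Γ.Adj i j → Ψ i j * (starRingEnd ℂ) (Ψ i j) = 1 := by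
    intro i j h
    rw [Complex.mul_conj, Complex.normSq_eq_norm_sq, habs i j h]
    norm_num
  have hconjΨ : ∀ i j, Γ.Adj i j → Ψ j i = (starRingEnd ℂ) (Ψ i j) := by
    intro i j h
    rw [hinv i j h]
    exact inv_eq_of_mul_eq_one_right (hmc i j h)
  have hmulinv : ∀ i j, Γ.Adj i j → Ψ j i * Ψ i j = 1 := by
    intro i j h
    rw [hinv i j h, inv_mul_cancel₀ (hne0 i j h)]
  set A : Matrix (Fin n) (Fin n) ℂ :=
    Matrix.of fun i j => if Γ.Adj i j then Ψ i j else 0 with hAdef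
  set B : Matrix (Fin n) (Fin n) ℂ := Γ.adjMatrix ℂ with hBdef
  have hAapp : ∀ i j, A i j = if Γ.Adj i j then Ψ i j else 0 := fun i j => rfl
  have hAH : A.IsHermitian := by
    ext i j
    rw [Matrix.conjTranspose_apply, hAapp, hAapp]
    by_cases h : Γ.Adj i j
    · rw [if_pos h.symm, if_pos h, hconjΨ i j h]
      simp [RCLike.star_def, Complex.conj_conj]
    · rw [if_neg (fun hc => h hc.symm), if_neg h, star_zero]
  have hBH : B.IsHermitian := by
    ext i j
    rw [Matrix.conjTranspose_apply, hBdef]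
    by_cases h : Γ.Adj i j
    · simp [SimpleGraph.adjMatrix_apply, h, h.symm]
    · have h' : ¬ Γ.Adj j i := fun hc => h hc.symm
      simp [SimpleGraph.adjMatrix_apply, h, h']
  constructor
  · -- balanced → equal indices
    intro hbal
    obtain ⟨v₀⟩ := hNE
    set θ : Fin n → ℂ := fun i => walkGain Ψ ((hconn.preconnected v₀ i).some) with hθdef
    have hθabs : ∀ i, ‖θ i‖ = 1 := fun i => walkGain_abs habs _
    have hθc : ∀ i, (starRingEnd ℂ) (θ i) * θ i = 1 := by
      intro i
      rw [mul_comm, Complex.mul_conj, Complex.normSq_eq_norm_sq, hθabs]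
      norm_num
    have hθedge : ∀ i j, Γ.Adj i j → θ i * Ψ i j = θ j := by
      intro i j h
      have hc : θ i * (Ψ i j * walkGain Ψ (((hconn.preconnected v₀ j).some).reverse)) = 1 := by
        have hc0 := hbal v₀ (((hconn.preconnected v₀ i).some).append
          (SimpleGraph.Walk.cons h ((hconn.preconnected v₀ j).some).reverse))
        rw [walkGain_append, walkGain_cons] at hc0
        exact hc0
      have hrev : walkGain Ψ (((hconn.preconnected v₀ j).some).reverse) * θ j = 1 :=
        walkGain_reverse_mul hmulinv ((hconn.preconnected v₀ j).some)
      calc θ i * Ψ i j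
          = θ i * Ψ i j * (walkGain Ψ (((hconn.preconnected v₀ j).some).reverse) * θ j) := by
            rw [hrev, mul_one]
        _ = (θ i * (Ψ i j * walkGain Ψ (((hconn.preconnected v₀ j).some).reverse))) * θ j := by
            ring
        _ = θ j := by rw [hc, one_mul]
    have hedge : ∀ i j, Γ.Adj i j → Ψ i j = (starRingEnd ℂ) (θ i) * θ j := by
      intro i j h
      calc Ψ i j = ((starRingEnd ℂ) (θ i) * θ i) * Ψ i j := by rw [hθc, one_mul]
        _ = (starRingEnd ℂ) (θ i) * (θ i * Ψ i j) := by ring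
        _ = (starRingEnd ℂ) (θ i) * θ j := by rw [hθedge i j h]
    have hABD : A = Matrix.diagonal (star θ) * B * Matrix.diagonal θ := by
      ext i j
      rw [Matrix.mul_diagonal, Matrix.diagonal_mul, hAapp]
      by_cases h : Γ.Adj i j
      · rw [if_pos h, hedge i j h, hBdef]
        simp [SimpleGraph.adjMatrix_apply, h, Pi.star_apply, RCLike.star_def]
      · rw [if_neg h, hBdef]
        simp [SimpleGraph.adjMatrix_apply, h]
    have hDD' : Matrix.diagonal (star θ) * Matrix.diagonal θ = 1 := by
      rw [Matrix.diagonal_mul_diagonal]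
      have h1 : (fun i => star θ i * θ i) = fun _ : Fin n => (1 : ℂ) := by
        funext i
        show star (θ i) * θ i = 1
        rw [RCLike.star_def]
        exact hθc i
      rw [h1, Matrix.diagonal_one]
    have hdet : ∀ μ : ℂ, (Matrix.scalar (Fin n) μ - A).det = (Matrix.scalar (Fin n) μ - B).det := by
      intro μ
      have key : Matrix.scalar (Fin n) μ - A
          = Matrix.diagonal (star θ) * (Matrix.scalar (Fin n) μ - B) * Matrix.diagonal θ := by
        rw [mul_sub, sub_mul, ← hABD]
        congr 1
        have hcomm : Matrix.diagonal (star θ) * Matrix.scalar (Fin n) μ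
            = Matrix.scalar (Fin n) μ * Matrix.diagonal (star θ) :=
          (Matrix.scalar_commute μ (fun r => Commute.all _ _) _).symm
        rw [hcomm, mul_assoc, hDD', mul_one]
      rw [key, Matrix.det_mul, Matrix.det_mul, mul_right_comm, ← Matrix.det_mul, hDD',
        Matrix.det_one, one_mul]
    have hcp : A.charpoly = B.charpoly :=
      Polynomial.funext fun μ => by rw [aux_charpoly_eval, aux_charpoly_eval, hdet]
    unfold lam1
    rw [hcp]
  · -- equal indices → balanced
    intro heq
    obtain ⟨x, hx0, hxeig⟩ := aux_exists_top_eigenvector hAH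
    set μR := lam1 A with hμ
    set S := ∑ i, Complex.normSq (x i) with hS
    have hlamB : lam1 B = μR := heq.symm
    have hReA : (star x ⬝ᵥ (A *ᵥ x)).re = μR * S := by
      rw [hxeig, dotProduct_smul, aux_dot_star_self, smul_eq_mul, ← Complex.ofReal_mul,
        Complex.ofReal_re]
    set y : Fin n → ℂ := fun i => ((‖x i‖ : ℝ) : ℂ) with hy
    have hynsq : ∀ i, Complex.normSq (y i) = Complex.normSq (x i) := by
      intro i
      show Complex.normSq ((‖x i‖ : ℝ) : ℂ) = _
      rw [Complex.normSq_ofReal, Complex.normSq_eq_norm_sq, sq]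
    have hR3 : ∀ i j, star (y i) * B i j * y j
        = ((if Γ.Adj i j then ‖x i‖ * ‖x j‖ else 0 : ℝ) : ℂ) := by
      intro i j
      by_cases h : Γ.Adj i j <;>
        simp [hy, hBdef, SimpleGraph.adjMatrix_apply, h, RCLike.star_def, Complex.conj_ofReal]
    have hReB : (star y ⬝ᵥ (B *ᵥ y)).re
        = ∑ i, ∑ j, (if Γ.Adj i j then ‖x i‖ * ‖x j‖ else 0) := by
      rw [aux_quad_expand]
      rw [show (∑ i, ∑ j, star (y i) * B i j * y j)
          = ((∑ i, ∑ j, (if Γ.Adj i j then ‖x i‖ * ‖x j‖ else 0) : ℝ) : ℂ) by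
        push_cast
        exact Finset.sum_congr rfl fun i _ => Finset.sum_congr rfl fun j _ => hR3 i j]
      rw [Complex.ofReal_re]
    have htermle : ∀ i j, (star (x i) * A i j * x j).re
        ≤ (if Γ.Adj i j then ‖x i‖ * ‖x j‖ else 0) := by
      intro i j
      by_cases h : Γ.Adj i j
      · rw [if_pos h]
        refine le_trans (Complex.re_le_norm _) ?_
        rw [norm_mul, norm_mul, hAapp, if_pos h, habs i j h]
        simp [RCLike.star_def, Complex.norm_conj]
      · simp [hAapp, h]
    have hReAle : (star x ⬝ᵥ (A *ᵥ x)).re ≤ (star y ⬝ᵥ (B *ᵥ y)).re := by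
      rw [aux_quad_expand, hReB, Complex.re_sum]
      refine Finset.sum_le_sum fun i _ => ?_
      rw [Complex.re_sum]
      exact Finset.sum_le_sum fun j _ => htermle i j
    have hSy : ∑ i, Complex.normSq (y i) = S := by
      rw [hS]; exact Finset.sum_congr rfl fun i _ => hynsq i
    have hRay := aux_rayleigh_le hBH y
    rw [hSy, hlamB] at hRay
    have hEq : (star y ⬝ᵥ (B *ᵥ y)).re = lam1 B * ∑ i, Complex.normSq (y i) := by
      rw [hlamB, hSy]
      have h1 : μR * S ≤ (star y ⬝ᵥ (B *ᵥ y)).re := hReA ▸ hReAle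
      linarith
    have hBy : B *ᵥ y = ((lam1 B : ℝ) : ℂ) • y := aux_rayleigh_eq hBH y hEq
    have hxne : ∀ i, x i ≠ 0 := by
      have hclosed : ∀ a b, Γ.Adj a b → x a = 0 → x b = 0 := by
        intro a b hab ha
        have h1 : (B *ᵥ y) a = 0 := by
          rw [hBy]
          show ((lam1 B : ℝ) : ℂ) * ((‖x a‖ : ℝ) : ℂ) = 0
          rw [ha]; simp
        have h2 : ∑ j, (if Γ.Adj a j then ‖x j‖ else 0) = 0 := by
          have hc : ((∑ j, (if Γ.Adj a j then ‖x j‖ else 0) : ℝ) : ℂ) = 0 := by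
            rw [← h1]
            show _ = B a ⬝ᵥ y
            rw [dotProduct]
            push_cast
            refine (Finset.sum_congr rfl fun j _ => ?_).symm
            by_cases hj : Γ.Adj a j <;>
              simp [hBdef, SimpleGraph.adjMatrix_apply, hj, hy]
          exact_mod_cast hc
        have h3 := (Finset.sum_eq_zero_iff_of_nonneg (fun j _ => by positivity)).mp h2 b
          (Finset.mem_univ b)
        rw [if_pos hab] at h3
        simpa using h3
      intro i hi
      obtain ⟨i₀, hi₀⟩ := Function.ne_iff.mp hx0
      have hw : ∀ {a c : Fin n} (p : Γ.Walk a c), x a = 0 → x c = 0 := by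
        intro a c p
        induction p with
        | nil => exact id
        | @cons a b c h q ih => exact fun ha => ih (hclosed _ _ h ha)
      exact hi₀ (hw ((hconn.preconnected i i₀).some) hi)
    have hReAeq : (star x ⬝ᵥ (A *ᵥ x)).re = (star y ⬝ᵥ (B *ᵥ y)).re := by
      rw [hReA, hEq, hlamB, hSy]
    have hzero2 : ∑ i, ∑ j, ((if Γ.Adj i j then ‖x i‖ * ‖x j‖ else 0)
        - (star (x i) * A i j * x j).re) = 0 := by
      have hth := hReAeq
      rw [aux_quad_expand, hReB] at hth
      rw [Complex.re_sum] at hth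
      simp only [Complex.re_sum] at hth
      simp only [Finset.sum_sub_distrib]
      rw [sub_eq_zero]
      exact hth.symm
    have halign0 : ∀ i j, Γ.Adj i j →
        (star (x i) * Ψ i j * x j).re = ‖x i‖ * ‖x j‖ := by
      intro i j h
      have houter := (Finset.sum_eq_zero_iff_of_nonneg (fun i _ =>
        Finset.sum_nonneg fun j _ => sub_nonneg.mpr (htermle i j))).mp hzero2 i (Finset.mem_univ i)
      have htermz := (Finset.sum_eq_zero_iff_of_nonneg (fun j _ =>
        sub_nonneg.mpr (htermle i j))).mp houter j (Finset.mem_univ j)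
      have h4 := sub_eq_zero.mp htermz
      rw [if_pos h] at h4
      rw [show A i j = Ψ i j from by rw [hAapp, if_pos h]] at h4
      exact h4.symm
    have halign : ∀ i j, Γ.Adj i j → star (x i) * Ψ i j * x j
        = ((‖x i‖ * ‖x j‖ : ℝ) : ℂ) := by
      intro i j h
      have h1 : ‖star (x i) * Ψ i j * x j‖
          = ‖x i‖ * ‖x j‖ := by
        rw [norm_mul, norm_mul, habs i j h]
        simp [RCLike.star_def, Complex.norm_conj]
      have h2 := halign0 i j h
      have h5 := aux_eq_abs_of_re_eq_abs (z := star (x i) * Ψ i j * x j) (by rw [h1, h2])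
      rw [h1] at h5
      exact_mod_cast h5
    -- the unimodular potential
    intro v p
    have hφu : ∀ i, (starRingEnd ℂ) (x i * (((‖x i‖ : ℝ) : ℂ))⁻¹)
        * (x i * (((‖x i‖ : ℝ) : ℂ))⁻¹) = 1 := by
      intro i
      have hai : (((‖x i‖ : ℝ)) : ℂ) ≠ 0 := by
        simp only [ne_eq, Complex.ofReal_eq_zero, norm_eq_zero]
        exact hxne i
      have e1 : (starRingEnd ℂ) (x i) * x i = ((‖x i‖ ^ 2 : ℝ) : ℂ) := by
        rw [mul_comm, Complex.mul_conj, Complex.normSq_eq_norm_sq]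
      rw [_root_.map_mul, map_inv₀, Complex.conj_ofReal]
      calc (starRingEnd ℂ) (x i) * (((‖x i‖ : ℝ) : ℂ))⁻¹
            * (x i * (((‖x i‖ : ℝ) : ℂ))⁻¹)
          = ((starRingEnd ℂ) (x i) * x i)
            * ((((‖x i‖ : ℝ) : ℂ))⁻¹ * (((‖x i‖ : ℝ) : ℂ))⁻¹) := by ring
        _ = 1 := by
            rw [e1]; push_cast; field_simp
    have hφe : ∀ i j, Γ.Adj i j → Ψ i j = (x i * (((‖x i‖ : ℝ) : ℂ))⁻¹)
        * (starRingEnd ℂ) (x j * (((‖x j‖ : ℝ) : ℂ))⁻¹) := by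
      intro i j h
      have hxi := hxne i
      have hxj := hxne j
      have hai : (((‖x i‖ : ℝ)) : ℂ) ≠ 0 := by
        simp only [ne_eq, Complex.ofReal_eq_zero, norm_eq_zero]; exact hxi
      have haj : (((‖x j‖ : ℝ)) : ℂ) ≠ 0 := by
        simp only [ne_eq, Complex.ofReal_eq_zero, norm_eq_zero]; exact hxj
      have e1 : (starRingEnd ℂ) (x i) * x i = ((‖x i‖ ^ 2 : ℝ) : ℂ) := by
        rw [mul_comm, Complex.mul_conj, Complex.normSq_eq_norm_sq]
      have e2 : (starRingEnd ℂ) (x j) * x j = ((‖x j‖ ^ 2 : ℝ) : ℂ) := by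
        rw [mul_comm, Complex.mul_conj, Complex.normSq_eq_norm_sq]
      have hkey : (starRingEnd ℂ) (x i)
          * ((x i * (((‖x i‖ : ℝ) : ℂ))⁻¹)
            * (starRingEnd ℂ) (x j * (((‖x j‖ : ℝ) : ℂ))⁻¹)) * x j
          = ((‖x i‖ * ‖x j‖ : ℝ) : ℂ) := by
        rw [_root_.map_mul, map_inv₀, Complex.conj_ofReal]
        calc (starRingEnd ℂ) (x i)
            * ((x i * (((‖x i‖ : ℝ) : ℂ))⁻¹)
              * ((starRingEnd ℂ) (x j) * (((‖x j‖ : ℝ) : ℂ))⁻¹)) * x j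
            = (((starRingEnd ℂ) (x i) * x i) * ((starRingEnd ℂ) (x j) * x j))
              * ((((‖x i‖ : ℝ) : ℂ))⁻¹ * (((‖x j‖ : ℝ) : ℂ))⁻¹) := by ring
          _ = _ := by
              rw [e1, e2]; push_cast; field_simp
      have h2 : (starRingEnd ℂ) (x i) * Ψ i j * x j
          = ((‖x i‖ * ‖x j‖ : ℝ) : ℂ) := by
        have := halign i j h
        rwa [show (star (x i)) = (starRingEnd ℂ) (x i) from rfl] at this
      have hcomb : (starRingEnd ℂ) (x i) * (Ψ i j * x j)
          = (starRingEnd ℂ) (x i) * (((x i * (((‖x i‖ : ℝ) : ℂ))⁻¹)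
            * (starRingEnd ℂ) (x j * (((‖x j‖ : ℝ) : ℂ))⁻¹)) * x j) := by
        rw [← mul_assoc, ← mul_assoc, h2, hkey]
      have hstarne : (starRingEnd ℂ) (x i) ≠ 0 := by
        simpa using hxi
      have := mul_left_cancel₀ hstarne hcomb
      exact mul_right_cancel₀ hxj this
    rw [walkGain_telescope hφu hφe p]
    rw [mul_comm]
    exact hφu v

end GainPaper
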